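/- Let b_1, …, b_r be a T-chain with parameters (d, n, a). Then the reversed list b_r, …, b_1 is a T-chain with parameters (d, n, n − a); that is, [b_r, …, b_1] = dn²/(dn(n−a) − 1). -/

import Mathlib

/-- Hirzebruch–Jung continued fraction of a list of integers:
`hjcf [] = 0` (junk value), `hjcf (b :: l) = b - 1 / hjcf l`.
Since `(0 : ℚ)⁻¹ = 0`, this gives `hjcf [b] = b`, matching the recursion
`[b_r] = b_r`, `[b_1, …, b_r] = b_1 − 1/[b_2, …, b_r]`. -/
def hjcf : List ℤ → ℚ
  | [] => 0
  | b :: l => (b : ℚ) - (hjcf l)⁻¹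

/-- `IsTChain l d n a` : the nonempty list `l` of integers, all ≥ 2, is a T-chain
with parameters `(d, n, a)`, i.e. its Hirzebruch–Jung continued fraction equals
`d n² / (d n a − 1)` where `d ≥ 1`, `n ≥ 2`, `0 < a < n`, `gcd(n, a) = 1`. -/
def IsTChain (l : List ℤ) (d n a : ℤ) : Prop :=
  l ≠ [] ∧ (∀ b ∈ l, 2 ≤ b) ∧
  1 ≤ d ∧ 2 ≤ n ∧ 0 < a ∧ a < n ∧ Int.gcd n a = 1 ∧
  hjcf l = (d * n ^ 2 : ℚ) / (d * n * a - 1)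

/-- Continuant data `(p, q, x, y)` of the matrix product
`M(b₁)⋯M(b_r)` where `M(b) = [[b,-1],[1,0]]`, stored as `[[p,-x],[q,-y]]`. -/
def hjP : List ℤ → ℤ × ℤ × ℤ × ℤ
  | [] => (1, 0, 0, -1)
  | b :: l => (b * (hjP l).1 - (hjP l).2.1, (hjP l).1,
               b * (hjP l).2.2.1 - (hjP l).2.2.2, (hjP l).2.2.1)

lemma hjP_nil : hjP [] = (1, 0, 0, -1) := rfl

lemma hjP_cons (b : ℤ) (l : List ℤ) :
    hjP (b :: l) = (b * (hjP l).1 - (hjP l).2.1, (hjP l).1,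
      b * (hjP l).2.2.1 - (hjP l).2.2.2, (hjP l).2.2.1) := rfl

lemma hjP_det (l : List ℤ) :
    (hjP l).2.2.1 * (hjP l).2.1 - (hjP l).1 * (hjP l).2.2.2 = 1 := by
  induction l with
  | nil => rfl
  | cons b l ih => simp only [hjP_cons]; ring_nf; ring_nf at ih; linarith

lemma hjP_append (l : List ℤ) (b : ℤ) :
    hjP (l ++ [b]) = (b * (hjP l).1 - (hjP l).2.2.1,
      b * (hjP l).2.1 - (hjP l).2.2.2, (hjP l).1, (hjP l).2.1) := by
  induction l with
  | nil => simp [hjP_cons, hjP_nil]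
  | cons c l ih =>
    simp only [List.cons_append, hjP_cons, ih]
    simp only [Prod.mk.injEq, and_true]
    ring

lemma hjP_reverse (l : List ℤ) :
    hjP l.reverse = ((hjP l).1, (hjP l).2.2.1, (hjP l).2.1, (hjP l).2.2.2) := by
  induction l with
  | nil => rfl
  | cons b l ih =>
    rw [List.reverse_cons, hjP_append, ih, hjP_cons]

lemma hjP_main (l : List ℤ) (h : ∀ b ∈ l, 2 ≤ b) :
    0 ≤ (hjP l).2.1 ∧ (hjP l).2.1 < (hjP l).1 ∧
    (hjcf l)⁻¹ = ((hjP l).2.1 : ℚ) / (hjP l).1 ∧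
    (l ≠ [] → hjcf l = ((hjP l).1 : ℚ) / (hjP l).2.1 ∧ 1 ≤ (hjP l).2.1) := by
  induction l with
  | nil => simp [hjcf, hjP_nil]
  | cons b t ih =>
    have hb : 2 ≤ b := h b (by simp)
    obtain ⟨h1, h2, h3, _⟩ := ih (fun c hc => h c (by simp [hc]))
    set p := (hjP t).1 with hp
    set q := (hjP t).2.1 with hq
    have hp1 : 1 ≤ p := by omega
    have hP : p < b * p - q := by nlinarith
    have hP1 : (1 : ℤ) ≤ b * p - q := by omega
    have hpQ : (p : ℚ) ≠ 0 := by exact_mod_cast (by omega : p ≠ 0)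
    have hPQ : ((b * p - q : ℤ) : ℚ) ≠ 0 := by exact_mod_cast (by omega : b * p - q ≠ 0)
    have hval : hjcf (b :: t) = ((b * p - q : ℤ) : ℚ) / (p : ℚ) := by
      show (b : ℚ) - (hjcf t)⁻¹ = _
      rw [h3]
      push_cast
      field_simp
    refine ⟨by simp [hjP_cons]; omega, by simpa [hjP_cons] using hP, ?_, fun _ => ⟨by simpa [hjP_cons] using hval, by simp [hjP_cons]; omega⟩⟩
    simp only [hjP_cons]
    rw [hval, inv_div]

/-- The reverse of a T-chain with parameters (d, n, a) is a
T-chain with parameters (d, n, n − a). -/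
theorem tchain_reverse (l : List ℤ) (d n a : ℤ) (h : IsTChain l d n a) :
    IsTChain l.reverse d n (n - a) := by
  obtain ⟨hne, hall, hd, hn, ha0, han, hgcd, hval⟩ := h
  set p := (hjP l).1 with hp
  set q := (hjP l).2.1 with hq
  set x := (hjP l).2.2.1 with hx
  set y := (hjP l).2.2.2 with hy
  obtain ⟨hq0, hqp, _, hpos⟩ := hjP_main l hall
  obtain ⟨heq, hq1⟩ := hpos hne
  have hdet : x * q - p * y = 1 := hjP_det l
  have hp1 : (1 : ℤ) ≤ p := by omega
  -- d n a - 1 ≥ 1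
  have hda : (1:ℤ) ≤ d * a := by nlinarith
  have hdna : n * 1 ≤ n * (d * a) := mul_le_mul_of_nonneg_left hda (by omega)
  have hre : d * n * a = n * (d * a) := by ring
  have hden : (1:ℤ) ≤ d * n * a - 1 := by linarith
  -- cross-multiplied identity
  have hq0' : ((q : ℚ)) ≠ 0 := by exact_mod_cast (by omega : q ≠ 0)
  have hdenQ : ((d:ℚ) * (n:ℚ) * (a:ℚ) - 1) ≠ 0 := by
    exact_mod_cast (show (d*n*a - 1 : ℤ) ≠ 0 by omega)
  rw [heq, div_eq_div_iff hq0' hdenQ] at hval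
  have hcross : p * (d * n * a - 1) = d * n ^ 2 * q := by exact_mod_cast hval
  -- coprimality facts
  have hcop1 : IsCoprime p q := ⟨-y, x, by linarith⟩
  have hcop2 : IsCoprime (d * n ^ 2) (d * n * a - 1) :=
    ⟨d * a ^ 2, -(d * a * n) - 1, by ring⟩
  -- p = d n², q = d n a − 1
  have h1 : p ∣ d * n ^ 2 :=
    hcop1.dvd_of_dvd_mul_right ⟨d * n * a - 1, hcross.symm⟩
  have h2 : d * n ^ 2 ∣ p :=
    hcop2.dvd_of_dvd_mul_right ⟨q, hcross⟩
  have hpval : p = d * n ^ 2 := Int.dvd_antisymm (by omega) (by positivity) h1 h2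
  have hqval : q = d * n * a - 1 := by
    have hdn : (d * n ^ 2 : ℤ) ≠ 0 := by rw [← hpval]; omega
    rw [hpval] at hcross
    exact (mul_left_cancel₀ hdn hcross).symm
  -- reverse data
  have hall' : ∀ b ∈ l.reverse, 2 ≤ b := fun b hb => hall b (List.mem_reverse.mp hb)
  have hne' : l.reverse ≠ [] := by simpa using hne
  obtain ⟨_, hxp', _, hpos'⟩ := hjP_main l.reverse hall'
  obtain ⟨heq', hx1'⟩ := hpos' hne'
  rw [hjP_reverse] at heq' hxp' hx1'
  dsimp only at heq' hxp' hx1'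
  have hx1 : 1 ≤ x := hx1'
  have hxp : x < p := hxp'
  -- determine x
  have hdet' : x * (d * n * a - 1) - d * n ^ 2 * y = 1 := by
    rw [hpval, hqval] at hdet; linarith
  have key : (d * n * a - 1) * (x - (d * n * (n - a) - 1)) =
      d * n ^ 2 * (y - (d * a * (n - a) - 1)) := by linear_combination hdet'
  have hdvd : d * n ^ 2 ∣ x - (d * n * (n - a) - 1) :=
    hcop2.dvd_of_dvd_mul_left ⟨_, key⟩
  obtain ⟨k, hk⟩ := hdvd
  rw [← hpval] at hk
  have hna1 : 1 ≤ n - a := by omega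
  have hxb1 : 1 ≤ d * n * (n - a) - 1 := by nlinarith
  have hxb2 : d * n * (n - a) - 1 < p := by rw [hpval]; nlinarith
  have hk0 : k = 0 := by
    rcases lt_trichotomy k 0 with hc | hc | hc
    · have h3 : p * k ≤ p * (-1) := mul_le_mul_of_nonneg_left (by omega) (by omega)
      rw [mul_neg_one] at h3; linarith
    · exact hc
    · have h3 : p * 1 ≤ p * k := mul_le_mul_of_nonneg_left (by omega) (by omega)
      rw [mul_one] at h3; linarith
  have hx' : x = d * n * (n - a) - 1 := by rw [hk0, mul_zero] at hk; omega
  refine ⟨hne', hall', hd, hn, by omega, by omega, ?_, ?_⟩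
  · rw [← Int.isCoprime_iff_gcd_eq_one] at hgcd ⊢
    obtain ⟨u, v, huv⟩ := hgcd
    exact ⟨u + v, -v, by linarith⟩
  · rw [heq', ← hp, ← hx, hpval, hx']
    push_cast
    ring_nf
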